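/- For real numbers a, b, c, d: (ca + db)² + (cb + da)² ≤ 2(c²+d²)(a²+b²). Consequently, for the hyperbolic inner product on 𝔾ⁿ defined by (x,y) = Σ x̄ᵢyᵢ, one has ‖(x,y)‖ ≤ √2 ‖x‖ ‖y‖ for all x, y ∈ 𝔾ⁿ. -/
import Mathlib


/-- Multiplication of hyperbolic (split-complex) numbers. -/
def gmul (z w : ℝ × ℝ) : ℝ × ℝ := (z.1 * w.1 + z.2 * w.2, z.1 * w.2 + z.2 * w.1)

/-- Hyperbolic conjugation. -/
def gconj (z : ℝ × ℝ) : ℝ × ℝ := (z.1, -z.2)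

/-- Euclidean norm on the hyperbolic numbers. -/
noncomputable def gnorm (z : ℝ × ℝ) : ℝ := Real.sqrt (z.1 ^ 2 + z.2 ^ 2)

/-- Hyperbolic inner product on `𝔾ⁿ`: `(x, y) = ∑ x̄ᵢ yᵢ`. -/
def gip {n : ℕ} (x y : Fin n → ℝ × ℝ) : ℝ × ℝ := ∑ i, gmul (gconj (x i)) (y i)

/-- Euclidean norm on `𝔾ⁿ`. -/
noncomputable def gnormVec {n : ℕ} (x : Fin n → ℝ × ℝ) : ℝ :=
  Real.sqrt (∑ i, ((x i).1 ^ 2 + (x i).2 ^ 2))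

/-- Cauchy–Schwarz for pairs of sequences. -/
lemma cs2 {n : ℕ} (f g h k : Fin n → ℝ) :
    (∑ i, (f i * g i + h i * k i)) ^ 2 ≤
      (∑ i, (f i ^ 2 + h i ^ 2)) * (∑ i, (g i ^ 2 + k i ^ 2)) := by
  have := Finset.sum_mul_sq_le_sq_mul_sq (Finset.univ : Finset (Fin n × Bool))
    (fun p => if p.2 then f p.1 else h p.1) (fun p => if p.2 then g p.1 else k p.1)
  simpa [Fintype.sum_prod_type, Finset.sum_add_distrib, add_comm] using this

theorem gip_norm_bound :
    (∀ a b c d : ℝ, (c * a + d * b) ^ 2 + (c * b + d * a) ^ 2 ≤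
        2 * (c ^ 2 + d ^ 2) * (a ^ 2 + b ^ 2)) ∧
    (∀ (n : ℕ) (x y : Fin n → ℝ × ℝ),
        gnorm (gip x y) ≤ Real.sqrt 2 * gnormVec x * gnormVec y) := by
  constructor
  · intro a b c d
    nlinarith [sq_nonneg (c * a - d * b), sq_nonneg (c * b - d * a), sq_nonneg (c*a + d*b), sq_nonneg (c*b + d*a)]
  · intro n x y
    set X := ∑ i, ((x i).1 ^ 2 + (x i).2 ^ 2) with hX
    set Y := ∑ i, ((y i).1 ^ 2 + (y i).2 ^ 2) with hY
    have hX0 : 0 ≤ X := Finset.sum_nonneg fun i _ => by positivity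
    have hY0 : 0 ≤ Y := Finset.sum_nonneg fun i _ => by positivity
    have h1 : (gip x y).1 = ∑ i, ((x i).1 * (y i).1 + (-(x i).2) * (y i).2) := by
      simp [gip, gmul, gconj, Prod.fst_sum]
    have h2 : (gip x y).2 = ∑ i, ((x i).1 * (y i).2 + (-(x i).2) * (y i).1) := by
      simp [gip, gmul, gconj, Prod.snd_sum]
    have c1 : (gip x y).1 ^ 2 ≤ X * Y := by
      rw [h1]
      have := cs2 (fun i => (x i).1) (fun i => (y i).1)
        (fun i => -(x i).2) (fun i => (y i).2)
      simpa using this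
    have c2 : (gip x y).2 ^ 2 ≤ X * Y := by
      rw [h2]
      have := cs2 (fun i => (x i).1) (fun i => (y i).2)
        (fun i => -(x i).2) (fun i => (y i).1)
      simpa [add_comm] using this
    have : gnorm (gip x y) ≤ Real.sqrt (2 * X * Y) := by
      apply Real.sqrt_le_sqrt
      nlinarith
    refine this.trans_eq ?_
    rw [gnormVec, gnormVec, ← hX, ← hY, mul_assoc, Real.sqrt_mul (by norm_num : (0:ℝ) ≤ 2), Real.sqrt_mul hX0, ← mul_assoc]
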